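/- arXiv:2604.08392 — 7 statements merged into one kernel-verified Lean document; each statement's English description precedes it below -/
import Mathlib

section
/- Let n, m, T be positive integers, A ∈ ℝ^{n×n}, B ∈ ℝ^{n×m}, and let X₋ ∈ ℝ^{n×T}, U ∈ ℝ^{m×T}, X₊ ∈ ℝ^{n×T} satisfy X₊ = A·X₋ + B·U. Let δ ∈ ℝ be arbitrary, define X̃₊ = X₊ + δ·X₋, and suppose G ∈ ℝ^{T×n} satisfies X₋·G = Iₙ and every eigenvalue of X̃₊·G over ℂ has modulus strictly less than 1. Then every eigenvalue of A + B·(U·G) over ℂ has modulus strictly greater than |δ| − 1. -/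
open Matrix

theorem stmt_2 {n m T : ℕ} (hn : 0 < n) (hm : 0 < m) (hT : 0 < T)
    (A : Matrix (Fin n) (Fin n) ℝ) (B : Matrix (Fin n) (Fin m) ℝ)
    (Xm Xp : Matrix (Fin n) (Fin T) ℝ) (U : Matrix (Fin m) (Fin T) ℝ)
    (hdata : Xp = A * Xm + B * U)
    (δ : ℝ)
    (Xp_tilde : Matrix (Fin n) (Fin T) ℝ)
    (hpoison : Xp_tilde = Xp + δ • Xm)
    (G : Matrix (Fin T) (Fin n) ℝ)
    (hG : Xm * G = 1)
    (happarent : ∀ μ ∈ spectrum ℂ ((Xp_tilde * G).map Complex.ofReal), ‖μ‖ < 1) :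
    ∀ μ ∈ spectrum ℂ ((A + B * (U * G)).map Complex.ofReal), |δ| - 1 < ‖μ‖ := by
  intro μ hμ
  have hmat : Xp_tilde * G = δ • (1 : Matrix (Fin n) (Fin n) ℝ) + (A + B * (U * G)) := by
    rw [hpoison, hdata, Matrix.add_mul, Matrix.add_mul, Matrix.smul_mul, hG, Matrix.mul_assoc, Matrix.mul_assoc, hG, Matrix.mul_one]
    exact add_comm _ _
  have hmap : (Xp_tilde * G).map Complex.ofReal =
      algebraMap ℂ (Matrix (Fin n) (Fin n) ℂ) (δ : ℂ)
        + (A + B * (U * G)).map Complex.ofReal := by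
    rw [hmat]
    ext i j
    simp [Matrix.add_apply, Matrix.map_apply, Matrix.smul_apply, Matrix.one_apply,
      Matrix.algebraMap_matrix_apply]
    split <;> simp
  have hmem : (δ : ℂ) + μ ∈ spectrum ℂ ((Xp_tilde * G).map Complex.ofReal) := by
    rw [hmap, add_comm (δ : ℂ) μ, spectrum.add_mem_iff]
    simpa using hμ
  have h1 : ‖(δ : ℂ) + μ‖ < 1 := happarent _ hmem
  have h2 : |δ| ≤ ‖(δ : ℂ) + μ‖ + ‖μ‖ := by
    calc |δ| = ‖(δ : ℂ) + μ - μ‖ := by simp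
    _ ≤ _ := by simpa using norm_sub_le ((δ : ℂ) + μ) μ
  linarith
end

section
/- Let n, m be positive integers, T a positive integer, A ∈ ℝ^{n×n}, B ∈ ℝ^{n×m}, δ ∈ ℝ. Let u(0), …, u(T−1) ∈ ℝ^m and x(0), …, x(T) ∈ ℝ^n satisfy x(k+1) = A·x(k) + B·u(k) for all 0 ≤ k ≤ T−1. Let X₋, U, X₊ be the matrices whose k-th columns (for 0 ≤ k ≤ T−1) are x(k), u(k), x(k+1) respectively. Suppose Δ(0) = 0 and that for each 0 ≤ k ≤ T−1 there exists g(k) ∈ ℝ^T with X₋·g(k) = Δ(k), U·g(k) = 0, and Δ(k+1) = X₊·g(k) + δ·(x(k) + Δ(k)). Then the poisoned trajectory defined by x̃(k) = x(k) + Δ(k) satisfies x̃(0) = x(0) and x̃(k+1) = (A + δ·I)·x̃(k) + B·u(k) for all 0 ≤ k ≤ T−1. -/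
open Matrix

theorem stmt_5 {n m T : ℕ} (hn : 0 < n) (hm : 0 < m) (hT : 0 < T)
    (A : Matrix (Fin n) (Fin n) ℝ) (B : Matrix (Fin n) (Fin m) ℝ) (δ : ℝ)
    (u : ℕ → (Fin m → ℝ)) (x : ℕ → (Fin n → ℝ))
    (hdyn : ∀ k < T, x (k + 1) = A.mulVec (x k) + B.mulVec (u k))
    (Xm : Matrix (Fin n) (Fin T) ℝ) (U : Matrix (Fin m) (Fin T) ℝ)
    (Xp : Matrix (Fin n) (Fin T) ℝ)
    (hXm : Xm = Matrix.of fun i (k : Fin T) => x k i)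
    (hU : U = Matrix.of fun i (k : Fin T) => u k i)
    (hXp : Xp = Matrix.of fun i (k : Fin T) => x (k + 1) i)
    (Δ : ℕ → (Fin n → ℝ))
    (hΔ0 : Δ 0 = 0)
    (hrec : ∀ k < T, ∃ g : Fin T → ℝ,
      Xm.mulVec g = Δ k ∧ U.mulVec g = 0 ∧
      Δ (k + 1) = Xp.mulVec g + δ • (x k + Δ k))
    (xt : ℕ → (Fin n → ℝ))
    (hxt : ∀ k, xt k = x k + Δ k) :
    xt 0 = x 0 ∧
      ∀ k < T, xt (k + 1) =
        (A + δ • (1 : Matrix (Fin n) (Fin n) ℝ)).mulVec (xt k) + B.mulVec (u k) := by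
  have hXpfac : Xp = A * Xm + B * U := by
    ext i k
    have hd := hdyn k k.isLt
    have : x (k + 1) i = (A.mulVec (x k)) i + (B.mulVec (u k)) i := by
      rw [hd]; rfl
    simp only [hXp, hXm, hU, Matrix.add_apply, Matrix.mul_apply, Matrix.of_apply]
    rw [this]
    simp [Matrix.mulVec, dotProduct]
  refine ⟨by simp [hxt, hΔ0], fun k hk => ?_⟩
  obtain ⟨g, hg1, hg2, hg3⟩ := hrec k hk
  have hXpg : Xp.mulVec g = A.mulVec (Δ k) := by
    rw [hXpfac, Matrix.add_mulVec, ← Matrix.mulVec_mulVec, ← Matrix.mulVec_mulVec,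
      hg1, hg2]
    simp
  rw [hxt (k+1), hxt k, hdyn k hk, hg3, hXpg, Matrix.add_mulVec,
    Matrix.smul_mulVec, Matrix.one_mulVec, Matrix.mulVec_add]
  abel
end

section
/- Let n, m be positive integers, T a positive integer, A ∈ ℝ^{n×n}, B ∈ ℝ^{n×m}, δ ∈ ℝ. Let u(0), …, u(T−1) ∈ ℝ^m and x(0), …, x(T) ∈ ℝ^n satisfy x(k+1) = A·x(k) + B·u(k) for all 0 ≤ k ≤ T−1, and let X₋, U, X₊ be the matrices whose k-th columns (0 ≤ k ≤ T−1) are x(k), u(k), x(k+1) respectively. Suppose Δ(0) = 0 and for each 0 ≤ k ≤ T−1 there exists g(k) ∈ ℝ^T with X₋·g(k) = Δ(k), U·g(k) = 0, and Δ(k+1) = X₊·g(k) + δ·(x(k) + Δ(k)). Define x̃(k) = x(k) + Δ(k), and let X̃₋ and X̃₊ be the n×T matrices whose k-th columns (0 ≤ k ≤ T−1) are x̃(k) and x̃(k+1) respectively. Then X̃₊ = (A + δ·I)·X̃₋ + B·U; that is, the poisoned dataset (U, X̃₋, X̃₊) is a trajectory of the apparent system with state matrix A + δ·I and input matrix B.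 -/
open Matrix

theorem stmt_6 {n m T : ℕ} (hn : 0 < n) (hm : 0 < m) (hT : 0 < T)
    (A : Matrix (Fin n) (Fin n) ℝ) (B : Matrix (Fin n) (Fin m) ℝ) (δ : ℝ)
    (u : ℕ → (Fin m → ℝ)) (x : ℕ → (Fin n → ℝ))
    (hdyn : ∀ k < T, x (k + 1) = A.mulVec (x k) + B.mulVec (u k))
    (Xm : Matrix (Fin n) (Fin T) ℝ) (U : Matrix (Fin m) (Fin T) ℝ)
    (Xp : Matrix (Fin n) (Fin T) ℝ)
    (hXm : Xm = Matrix.of fun i (k : Fin T) => x k i)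
    (hU : U = Matrix.of fun i (k : Fin T) => u k i)
    (hXp : Xp = Matrix.of fun i (k : Fin T) => x (k + 1) i)
    (Δ : ℕ → (Fin n → ℝ))
    (hΔ0 : Δ 0 = 0)
    (hrec : ∀ k < T, ∃ g : Fin T → ℝ,
      Xm.mulVec g = Δ k ∧ U.mulVec g = 0 ∧
      Δ (k + 1) = Xp.mulVec g + δ • (x k + Δ k))
    (xt : ℕ → (Fin n → ℝ))
    (hxt : ∀ k, xt k = x k + Δ k)
    (Xmt Xpt : Matrix (Fin n) (Fin T) ℝ)
    (hXmt : Xmt = Matrix.of fun i (k : Fin T) => xt k i)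
    (hXpt : Xpt = Matrix.of fun i (k : Fin T) => xt (k + 1) i) :
    Xpt = (A + δ • (1 : Matrix (Fin n) (Fin n) ℝ)) * Xmt + B * U := by
  -- Xp = A * Xm + B * U
  have hXpEq : Xp = A * Xm + B * U := by
    subst hXm hU hXp
    ext i k
    have h := hdyn k k.isLt
    have := congrFun h i
    simpa [Matrix.add_apply, Matrix.mul_apply, Matrix.mulVec, dotProduct,
      Pi.add_apply] using this
  -- key column identity
  have key : ∀ k < T, xt (k + 1) = A.mulVec (xt k) + B.mulVec (u k) + δ • xt k := by
    intro k hk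
    obtain ⟨g, hg1, hg2, hg3⟩ := hrec k hk
    have hXpg : Xp.mulVec g = A.mulVec (Δ k) := by
      rw [hXpEq, Matrix.add_mulVec, ← Matrix.mulVec_mulVec, ← Matrix.mulVec_mulVec,
        hg1, hg2, Matrix.mulVec_zero, add_zero]
    have hΔ1 : Δ (k + 1) = A.mulVec (Δ k) + δ • xt k := by
      rw [hg3, hXpg, hxt k]
    rw [hxt (k + 1), hdyn k hk, hΔ1, hxt k, Matrix.mulVec_add]
    abel
  subst hXmt hXpt
  ext i k
  have h := congrFun (key k k.isLt) i
  simp only [Matrix.add_apply, Matrix.mul_apply, Matrix.of_apply, Pi.add_apply,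
    Pi.smul_apply, Matrix.mulVec, dotProduct, Matrix.smul_apply, Matrix.one_apply,
    Matrix.add_apply, smul_eq_mul] at h ⊢
  rw [h]
  have hs : ∑ j, (A i j + δ * if i = j then 1 else 0) * xt k j
      = (∑ j, A i j * xt (k : ℕ) j) + δ * xt k i := by
    simp [add_mul, Finset.sum_add_distrib, ite_mul, Finset.sum_ite_eq]
  rw [hs, hU]
  simp only [Matrix.of_apply]
  ring
end

section
/- Let n, m be positive integers, T a positive integer, A ∈ ℝ^{n×n}, B ∈ ℝ^{n×m}, and δ ∈ ℝ with |δ| ≥ 2. Let u(0), …, u(T−1) ∈ ℝ^m and x(0), …, x(T) ∈ ℝ^n satisfy x(k+1) = A·x(k) + B·u(k) for all 0 ≤ k ≤ T−1, and let X₋, U, X₊ be the matrices whose k-th columns (0 ≤ k ≤ T−1) are x(k), u(k), x(k+1) respectively. Suppose Δ(0) = 0 and for each 0 ≤ k ≤ T−1 there exists g(k) ∈ ℝ^T with X₋·g(k) = Δ(k), U·g(k) = 0, and Δ(k+1) = X₊·g(k) + δ·(x(k) + Δ(k)). Define x̃(k) = x(k) + Δ(k) and let X̃₋, X̃₊ be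 the n×T matrices whose k-th columns are x̃(k), x̃(k+1) respectively. If G̃ ∈ ℝ^{T×n} satisfies X̃₋·G̃ = Iₙ and the apparent closed-loop matrix X̃₊·G̃ is Schur stable, then every eigenvalue of the true closed-loop matrix A + B·(U·G̃) over ℂ has modulus strictly greater than 1; in particular, A + B·(U·G̃) is not Schur stable. -/
open Matrix

/-- A real square matrix is Schur stable if every eigenvalue over ℂ has modulus < 1. -/
def SchurStable {n : ℕ} (M : Matrix (Fin n) (Fin n) ℝ) : Prop :=
  ∀ μ ∈ spectrum ℂ (M.map Complex.ofReal), ‖μ‖ < 1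

theorem stmt_7 {n m T : ℕ} (hn : 0 < n) (hm : 0 < m) (hT : 0 < T)
    (A : Matrix (Fin n) (Fin n) ℝ) (B : Matrix (Fin n) (Fin m) ℝ)
    (δ : ℝ) (hδ : 2 ≤ |δ|)
    (u : ℕ → (Fin m → ℝ)) (x : ℕ → (Fin n → ℝ))
    (hdyn : ∀ k < T, x (k + 1) = A.mulVec (x k) + B.mulVec (u k))
    (Xm : Matrix (Fin n) (Fin T) ℝ) (U : Matrix (Fin m) (Fin T) ℝ)
    (Xp : Matrix (Fin n) (Fin T) ℝ)
    (hXm : Xm = Matrix.of fun i (k : Fin T) => x k i)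
    (hU : U = Matrix.of fun i (k : Fin T) => u k i)
    (hXp : Xp = Matrix.of fun i (k : Fin T) => x (k + 1) i)
    (Δ : ℕ → (Fin n → ℝ))
    (hΔ0 : Δ 0 = 0)
    (hrec : ∀ k < T, ∃ g : Fin T → ℝ,
      Xm.mulVec g = Δ k ∧ U.mulVec g = 0 ∧
      Δ (k + 1) = Xp.mulVec g + δ • (x k + Δ k))
    (xt : ℕ → (Fin n → ℝ))
    (hxt : ∀ k, xt k = x k + Δ k)
    (Xmt Xpt : Matrix (Fin n) (Fin T) ℝ)
    (hXmt : Xmt = Matrix.of fun i (k : Fin T) => xt k i)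
    (hXpt : Xpt = Matrix.of fun i (k : Fin T) => xt (k + 1) i)
    (Gt : Matrix (Fin T) (Fin n) ℝ)
    (hGt : Xmt * Gt = 1)
    (happarent : SchurStable (Xpt * Gt)) :
    (∀ μ ∈ spectrum ℂ ((A + B * (U * Gt)).map Complex.ofReal), 1 < ‖μ‖) ∧
      ¬ SchurStable (A + B * (U * Gt)) := by
  -- Step 1: Xp = A * Xm + B * U
  have hXpEq : Xp = A * Xm + B * U := by
    ext i k
    have := hdyn k k.isLt
    subst hXp hXm hU
    simp only [Matrix.add_apply, Matrix.mul_apply, Matrix.of_apply]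
    have h := congrFun this i
    simp only [Pi.add_apply, Matrix.mulVec, dotProduct] at h
    simpa using h
  -- Step 2: Xpt = A * Xmt + B * U + δ • Xmt
  have hXptEq : Xpt = A * Xmt + B * U + δ • Xmt := by
    ext i k
    obtain ⟨g, hg1, hg2, hg3⟩ := hrec k k.isLt
    have hXpg : Xp.mulVec g = A.mulVec (Δ k) := by
      rw [hXpEq, Matrix.add_mulVec, ← Matrix.mulVec_mulVec, ← Matrix.mulVec_mulVec,
        hg1, hg2]
      simp
    have hcol : xt (k + 1) = A.mulVec (xt k) + B.mulVec (u k) + δ • xt k := by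
      rw [hxt (k + 1), hxt k, hdyn k k.isLt, hg3, hXpg, Matrix.mulVec_add, ← hxt k]
      abel
    subst hXpt hXmt hU
    simp only [Matrix.add_apply, Matrix.smul_apply, Matrix.mul_apply, Matrix.of_apply,
      smul_eq_mul]
    have h := congrFun hcol i
    simp only [Pi.add_apply, Pi.smul_apply, Matrix.mulVec, dotProduct, smul_eq_mul] at h
    simpa using h
  -- Step 3: closed-loop identity
  have hkey : Xpt * Gt = algebraMap ℝ (Matrix (Fin n) (Fin n) ℝ) δ + (A + B * (U * Gt)) := by
    rw [hXptEq, Matrix.add_mul, Matrix.add_mul, Matrix.smul_mul, hGt, Matrix.mul_assoc A Xmt Gt, hGt,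
      Matrix.mul_one, Matrix.mul_assoc B U Gt, Algebra.algebraMap_eq_smul_one]
    abel
  -- Map to ℂ
  set M := A + B * (U * Gt) with hM
  have hmap : (Xpt * Gt).map Complex.ofReal =
      algebraMap ℂ (Matrix (Fin n) (Fin n) ℂ) (δ : ℂ) + M.map Complex.ofReal := by
    rw [hkey]
    ext i j
    simp [Algebra.algebraMap_eq_smul_one, Matrix.one_apply, apply_ite Complex.ofReal]
  have hspec : ∀ μ ∈ spectrum ℂ (M.map Complex.ofReal), ‖(δ : ℂ) + μ‖ < 1 := by
    intro μ hμ
    apply happarent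
    rw [hmap, ← spectrum.singleton_add_eq]
    exact Set.add_mem_add rfl hμ
  have hbig : ∀ μ ∈ spectrum ℂ (M.map Complex.ofReal), 1 < ‖μ‖ := by
    intro μ hμ
    have h1 := hspec μ hμ
    have h2 : |δ| ≤ ‖(δ : ℂ) + μ‖ + ‖μ‖ := by
      have := norm_add_le ((δ : ℂ) + μ) (-μ)
      simpa [Complex.norm_real] using this
    linarith
  refine ⟨hbig, fun hschur => ?_⟩
  have : Nontrivial (Matrix (Fin n) (Fin n) ℂ) := by
    have : Nonempty (Fin n) := ⟨⟨0, hn⟩⟩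
    infer_instance
  obtain ⟨μ, hμ⟩ := spectrum.nonempty_of_isAlgClosed_of_finiteDimensional ℂ
    (M.map Complex.ofReal)
  exact absurd (hschur μ hμ) (not_lt.mpr (le_of_lt (hbig μ hμ)))
end

section
/- Let n, m, T be positive integers, A ∈ ℝ^{n×n}, B ∈ ℝ^{n×m}, and let X₋ ∈ ℝ^{n×T}, U ∈ ℝ^{m×T}, X₊ ∈ ℝ^{n×T} satisfy X₊ = A·X₋ + B·U. Let δ ∈ ℝ with |δ| ≥ 2 and let G_map ∈ ℝ^{T×T} satisfy U·G_map = U. Define the poisoned Hankel matrices X̃₋ = X₋·G_map and X̃₊ = (X₊ + δ·X₋)·G_map. If G̃ ∈ ℝ^{T×n} satisfies X̃₋·G̃ = Iₙ and the apparent closed-loop matrix X̃₊·G̃ is Schur stable, then every eigenvalue of A + B·(U·G̃) over ℂ has modulus strictly greater than 1. -/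
open Matrix

theorem stmt_8 {n m T : ℕ} (hn : 0 < n) (hm : 0 < m) (hT : 0 < T)
    (A : Matrix (Fin n) (Fin n) ℝ) (B : Matrix (Fin n) (Fin m) ℝ)
    (Xm Xp : Matrix (Fin n) (Fin T) ℝ) (U : Matrix (Fin m) (Fin T) ℝ)
    (hdata : Xp = A * Xm + B * U)
    (δ : ℝ) (hδ : 2 ≤ |δ|)
    (Gmap : Matrix (Fin T) (Fin T) ℝ)
    (hGmap : U * Gmap = U)
    (Xmt Xpt : Matrix (Fin n) (Fin T) ℝ)
    (hXmt : Xmt = Xm * Gmap)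
    (hXpt : Xpt = (Xp + δ • Xm) * Gmap)
    (Gt : Matrix (Fin T) (Fin n) ℝ)
    (hGt : Xmt * Gt = 1)
    (happarent : SchurStable (Xpt * Gt)) :
    ∀ μ ∈ spectrum ℂ ((A + B * (U * Gt)).map Complex.ofReal), 1 < ‖μ‖ := by
  intro μ hμ
  set K : Matrix (Fin n) (Fin n) ℝ := A + B * (U * Gt) with hK
  have hkey : Xpt * Gt = K + δ • 1 := by
    subst hXpt hdata
    rw [hXmt] at hGt
    rw [Matrix.add_mul, Matrix.add_mul, Matrix.add_mul, Matrix.add_mul,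
      Matrix.smul_mul, Matrix.smul_mul,
      Matrix.mul_assoc A, Matrix.mul_assoc B, hGmap, Matrix.mul_assoc A, hGt,
      Matrix.mul_assoc B, Matrix.mul_one]
  have hmap : (Xpt * Gt).map Complex.ofReal
      = algebraMap ℂ _ (δ : ℂ) + K.map Complex.ofReal := by
    rw [hkey]
    ext i j
    simp [Matrix.algebraMap_matrix_apply, Matrix.one_apply, apply_ite Complex.ofReal,
      add_comm]
  have hshift : (δ : ℂ) + μ ∈ spectrum ℂ ((Xpt * Gt).map Complex.ofReal) := by
    rw [hmap, ← spectrum.singleton_add_eq]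
    exact Set.add_mem_add rfl hμ
  have h1 : ‖(δ : ℂ) + μ‖ < 1 := happarent _ hshift
  have h2 : (2 : ℝ) ≤ ‖(δ : ℂ)‖ := by
    rwa [Complex.norm_real, Real.norm_eq_abs]
  have h3 : ‖(δ : ℂ)‖ ≤ ‖(δ:ℂ) + μ‖ + ‖μ‖ := by
    have h4 := norm_add_le ((δ:ℂ) + μ) (-μ)
    rw [add_neg_cancel_right, norm_neg] at h4
    exact h4
  linarith
end

section
/- Let n, m be positive integers, A ∈ ℝ^{n×n}, B ∈ ℝ^{n×m}, and δ ∈ ℝ with |δ| < 2. Assume the pair (A + δ·I, B) admits uniform pole placement, i.e., for every μ ∈ ℝ there exists K ∈ ℝ^{m×n} such that every eigenvalue of (A + δ·I) + B·K over ℂ equals μ. Then there exists K ∈ ℝ^{m×n} such that both the apparent closed-loop matrix (A + δ·I) + B·K and the true closed-loop matrix A + B·K are Schur stable. In particular, a poisoning shift of magnitude |δ| < 2 is not effective for destabilization. -/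
open Matrix

theorem stmt_9 {n m : ℕ} (hn : 0 < n) (hm : 0 < m)
    (A : Matrix (Fin n) (Fin n) ℝ) (B : Matrix (Fin n) (Fin m) ℝ)
    (δ : ℝ) (hδ : |δ| < 2)
    (hplace : ∀ μ : ℝ, ∃ K : Matrix (Fin m) (Fin n) ℝ,
      ∀ z ∈ spectrum ℂ
        ((A + δ • (1 : Matrix (Fin n) (Fin n) ℝ) + B * K).map Complex.ofReal),
        z = (μ : ℂ)) :
    ∃ K : Matrix (Fin m) (Fin n) ℝ,
      SchurStable (A + δ • (1 : Matrix (Fin n) (Fin n) ℝ) + B * K) ∧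
        SchurStable (A + B * K) := by
  obtain ⟨K, hK⟩ := hplace (δ / 2)
  refine ⟨K, ?_, ?_⟩
  · intro z hz
    rw [hK z hz]
    simp only [Complex.norm_real, Real.norm_eq_abs, abs_div]
    rw [abs_of_pos (by norm_num : (0:ℝ) < 2)]
    linarith [abs_nonneg δ]
  · intro z hz
    have hmap : (A + B * K).map (Complex.ofReal) =
        (A + δ • (1 : Matrix (Fin n) (Fin n) ℝ) + B * K).map Complex.ofReal
          - algebraMap ℂ (Matrix (Fin n) (Fin n) ℂ) (δ : ℂ) := by
      ext i j
      simp [Matrix.map_apply, Matrix.add_apply, Matrix.sub_apply, Matrix.algebraMap_matrix_apply,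
        Matrix.smul_apply, Matrix.one_apply, apply_ite, mul_comm]
      split
      · ring
      · simp_all
    rw [hmap, ← spectrum.sub_singleton_eq, Set.mem_sub] at hz
    obtain ⟨w, hw, r, hr, hwz⟩ := hz
    have hwe := hK w hw
    simp only [Set.mem_singleton_iff] at hr
    subst hr
    rw [← hwz, hwe]
    have : ((δ / 2 : ℝ) : ℂ) - (δ : ℂ) = ((-(δ/2) : ℝ) : ℂ) := by push_cast; ring
    rw [this]
    simp only [Complex.norm_real, Real.norm_eq_abs, abs_neg, abs_div]
    rw [abs_of_pos (by norm_num : (0:ℝ) < 2)]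
    linarith [abs_nonneg δ]
end

section
/- Let n, m, T be positive integers, A ∈ ℝ^{n×n}, B ∈ ℝ^{n×m}, and let X₋ ∈ ℝ^{n×T}, U ∈ ℝ^{m×T}, X₊ ∈ ℝ^{n×T} satisfy X₊ = A·X₋ + B·U. Then there exists a poisoned matrix X̃₊ ∈ ℝ^{n×T} (namely X̃₊ = X₊ + 2·X₋) with the property that for every G ∈ ℝ^{T×n} satisfying X₋·G = Iₙ such that X̃₊·G is Schur stable, the matrix A + B·(U·G) is not Schur stable. In other words, a destabilizing data-poisoning attack always exists, independently of the system matrices A and B. -/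
open Matrix

theorem stmt_12 {n m T : ℕ} (hn : 0 < n) (hm : 0 < m) (hT : 0 < T)
    (A : Matrix (Fin n) (Fin n) ℝ) (B : Matrix (Fin n) (Fin m) ℝ)
    (Xm Xp : Matrix (Fin n) (Fin T) ℝ) (U : Matrix (Fin m) (Fin T) ℝ)
    (hdata : Xp = A * Xm + B * U) :
    ∃ Xpt : Matrix (Fin n) (Fin T) ℝ, Xpt = Xp + (2 : ℝ) • Xm ∧
      ∀ G : Matrix (Fin T) (Fin n) ℝ, Xm * G = 1 →
        SchurStable (Xpt * G) → ¬ SchurStable (A + B * (U * G)) := by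
  refine ⟨Xp + (2 : ℝ) • Xm, rfl, ?_⟩
  intro G hG hstab hstab'
  haveI : NeZero n := ⟨hn.ne'⟩
  set M : Matrix (Fin n) (Fin n) ℂ := (A + B * (U * G)).map Complex.ofReal with hM
  have hXpG : Xp * G = A + B * (U * G) := by
    rw [hdata, Matrix.add_mul, Matrix.mul_assoc, Matrix.mul_assoc, hG, Matrix.mul_one]
  have hmap : ((Xp + (2 : ℝ) • Xm) * G).map Complex.ofReal
      = algebraMap ℂ _ (2 : ℂ) + M := by
    rw [Matrix.add_mul, Matrix.smul_mul, hG, hXpG]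
    ext i j
    simp [Matrix.map_apply, Matrix.add_apply, Matrix.smul_apply, algebraMap,
      Matrix.one_apply, Matrix.scalar, Matrix.diagonal]
    split <;> simp [hM, Matrix.map_apply, Matrix.add_apply] <;> ring
  obtain ⟨μ, hμ⟩ := spectrum.nonempty_of_isAlgClosed_of_finiteDimensional ℂ M
  have h1 : ‖μ‖ < 1 := hstab' μ hμ
  have h2 : ‖μ + 2‖ < 1 := by
    have : μ + 2 ∈ spectrum ℂ (((Xp + (2 : ℝ) • Xm) * G).map Complex.ofReal) := by
      rw [hmap]
      exact (spectrum.add_mem_add_iff).mpr hμ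
    exact hstab _ this
  have h := norm_add_le (μ + 2) (-μ)
  simp at h
  linarith
end
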